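/- arXiv:1411.3113 — 3 statements merged into one kernel-verified Lean document; each statement's English description precedes it below -/
import Mathlib

section
/- If u is a solution of the Lorenz '96 equation on [0,∞), then for all t ≥ 0 one has the energy bound |u(t)|² ≤ |u(0)|²·e^{−t} + J·F²·(1 − e^{−t}). -/
open scoped RealInnerProductSpace

noncomputable section

/-- The Lorenz '96 bilinear map `B` on `ℝ^J`, with cyclic indexing via `ZMod J`:
`B(u,w)^(j) = -(1/2)[w^(j-1)u^(j+1) + u^(j-1)w^(j+1) - w^(j-2)u^(j-1) - u^(j-2)w^(j-1)]`. -/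
def L96B {J : ℕ} [NeZero J] (u w : EuclideanSpace ℝ (ZMod J)) :
    EuclideanSpace ℝ (ZMod J) :=
  WithLp.toLp 2 (fun j => -(1/2 : ℝ) * (w (j - 1) * u (j + 1) + u (j - 1) * w (j + 1)
    - w (j - 2) * u (j - 1) - u (j - 2) * w (j - 1)))

/-- The constant forcing vector `f = (F, ..., F)`. -/
def L96f {J : ℕ} [NeZero J] (F : ℝ) : EuclideanSpace ℝ (ZMod J) := WithLp.toLp 2 (fun _ => F)

/-- `u` solves the Lorenz '96 equation `u' = -u - B(u,u) + f` on the set `I`. -/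
def L96Sol {J : ℕ} [NeZero J] (F : ℝ) (I : Set ℝ)
    (u : ℝ → EuclideanSpace ℝ (ZMod J)) : Prop :=
  ∀ t ∈ I, HasDerivAt u (-u t - L96B (u t) (u t) + L96f F) t

/-- The projection `P` setting to zero every third coordinate
(those with 1-based index `≡ 0 mod 3`, i.e. `ZMod J`-index with value `≡ 0 mod 3`
when `3 ∣ J`). -/
def L96P {J : ℕ} [NeZero J] (u : EuclideanSpace ℝ (ZMod J)) :
    EuclideanSpace ℝ (ZMod J) :=
  WithLp.toLp 2 (fun j : ZMod J => if j.val % 3 = 0 then 0 else u j)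

/-- The complementary projection `Q = I - P`. -/
def L96Q {J : ℕ} [NeZero J] (u : EuclideanSpace ℝ (ZMod J)) :
    EuclideanSpace ℝ (ZMod J) :=
  u - L96P u

lemma l96_inner_B_self {J : ℕ} [NeZero J] (u : EuclideanSpace ℝ (ZMod J)) :
    ⟪L96B u u, u⟫ = 0 := by
  rw [PiLp.inner_apply]
  simp only [RCLike.inner_apply, conj_trivial]
  simp only [mul_comm (WithLp.ofLp u _) (WithLp.ofLp (L96B u u) _)]
  have h1 : ∀ j : ZMod J, L96B u u j * u j
      = u (j-2) * u (j-1) * u j - u (j-1) * u (j+1) * u j := by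
    intro j; simp only [L96B, PiLp.toLp_apply]; ring
  calc ∑ j : ZMod J, L96B u u j * u j
      = ∑ j : ZMod J, (u (j-2) * u (j-1) * u j - u (j-1) * u (j+1) * u j) :=
        Finset.sum_congr rfl fun j _ => h1 j
    _ = (∑ j : ZMod J, u (j-2) * u (j-1) * u j)
        - ∑ j : ZMod J, u (j-1) * u (j+1) * u j := Finset.sum_sub_distrib _ _
    _ = 0 := by
        have he := Fintype.sum_equiv (Equiv.addRight (1 : ZMod J))
          (fun j => u (j-1) * u (j+1) * u j)
          (fun j => u (j-2) * u (j-1) * u j) ?_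
        · rw [← he, sub_self]
        · intro j
          simp only [Equiv.coe_addRight]
          have e1 : j + 1 - 2 = j - 1 := by ring
          have e2 : j + 1 - 1 = j := by ring
          rw [e1, e2]; ring

/-- energy bound `|u(t)|² ≤ |u(0)|²e^{−t} + JF²(1 − e^{−t})` for any
solution of the Lorenz '96 equation on `[0,∞)`. -/
theorem l96_energy_bound {J : ℕ} [NeZero J] (hJ : 3 ≤ J) (F : ℝ)
    (u : ℝ → EuclideanSpace ℝ (ZMod J)) (hu : L96Sol F (Set.Ici 0) u) :
    ∀ t : ℝ, 0 ≤ t →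
      ‖u t‖ ^ 2 ≤ ‖u 0‖ ^ 2 * Real.exp (-t) + J * F ^ 2 * (1 - Real.exp (-t)) := by
  set c : ℝ := (J : ℝ) * F ^ 2 with hc
  have hfnorm : ‖(L96f F : EuclideanSpace ℝ (ZMod J))‖ ^ 2 = c := by
    rw [← real_inner_self_eq_norm_sq, PiLp.inner_apply]
    simp only [RCLike.inner_apply, conj_trivial, L96f, PiLp.toLp_apply]
    rw [Finset.sum_const, Finset.card_univ, ZMod.card, nsmul_eq_mul]
    ring
  set g : ℝ → ℝ := fun s => ⟪u s, u s⟫ with hg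
  set φ : ℝ → ℝ := fun s => g s * Real.exp s - c * Real.exp s with hφ
  have hφ' : ∀ t ∈ Set.Ici (0:ℝ), HasDerivAt φ
      ((2 * ⟪u t, -u t - L96B (u t) (u t) + L96f F⟫ + g t - c) * Real.exp t) t := by
    intro t ht
    have hu' := hu t ht
    have h1 : HasDerivAt g
        (⟪u t, -u t - L96B (u t) (u t) + L96f F⟫
          + ⟪-u t - L96B (u t) (u t) + L96f F, u t⟫) t := hu'.inner ℝ hu'
    have h2 := (h1.mul (Real.hasDerivAt_exp t)).sub ((Real.hasDerivAt_exp t).const_mul c)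
    refine h2.congr_deriv ?_
    rw [real_inner_comm (u t) (-u t - L96B (u t) (u t) + L96f F)]
    ring
  have hD : ∀ t : ℝ, 0 ≤ t →
      (2 * ⟪u t, -u t - L96B (u t) (u t) + L96f F⟫ + g t - c) * Real.exp t ≤ 0 := by
    intro t ht
    have hB : ⟪u t, L96B (u t) (u t)⟫ = 0 := by
      rw [real_inner_comm]; exact l96_inner_B_self (u t)
    have hsplit : ⟪u t, -u t - L96B (u t) (u t) + L96f F⟫
        = -g t + ⟪u t, L96f F⟫ := by
      rw [inner_add_right, inner_sub_right, inner_neg_right, hB]; simp only [hg]; ring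
    have hcs : ⟪u t, L96f F⟫ ≤ ‖u t‖ * ‖(L96f F : EuclideanSpace ℝ (ZMod J))‖ :=
      real_inner_le_norm _ _
    have hamgm : 2 * (‖u t‖ * ‖(L96f F : EuclideanSpace ℝ (ZMod J))‖)
        ≤ ‖u t‖ ^ 2 + ‖(L96f F : EuclideanSpace ℝ (ZMod J))‖ ^ 2 := by
      nlinarith [sq_nonneg (‖u t‖ - ‖(L96f F : EuclideanSpace ℝ (ZMod J))‖)]
    have hgt : g t = ‖u t‖ ^ 2 := real_inner_self_eq_norm_sq (u t)
    have hE : (0:ℝ) < Real.exp t := Real.exp_pos t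
    have : 2 * ⟪u t, -u t - L96B (u t) (u t) + L96f F⟫ + g t - c ≤ 0 := by
      rw [hsplit]; nlinarith
    nlinarith
  have hcont : ContinuousOn φ (Set.Ici 0) :=
    fun t ht => ((hφ' t ht).continuousAt).continuousWithinAt
  have hanti : AntitoneOn φ (Set.Ici 0) := by
    apply antitoneOn_of_deriv_nonpos (convex_Ici 0) hcont
    · rw [interior_Ici]
      exact fun t ht => ((hφ' t (Set.mem_Ici.mpr (le_of_lt ht))).differentiableAt).differentiableWithinAt
    · rw [interior_Ici]
      intro t ht
      rw [(hφ' t (Set.mem_Ici.mpr (le_of_lt ht))).deriv]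
      exact hD t (le_of_lt ht)
  intro t ht
  have hpt := hanti Set.self_mem_Ici ht ht
  simp only [hφ, Real.exp_zero, mul_one] at hpt
  have hgt : g t = ‖u t‖ ^ 2 := real_inner_self_eq_norm_sq (u t)
  have hg0 : g 0 = ‖u 0‖ ^ 2 := real_inner_self_eq_norm_sq (u 0)
  have hE : (0:ℝ) < Real.exp t := Real.exp_pos t
  have hE' : (0:ℝ) < Real.exp (-t) := Real.exp_pos (-t)
  have hEE : Real.exp (-t) * Real.exp t = 1 := by
    rw [← Real.exp_add]; simp
  rw [← hgt, ← hg0, hc]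
  nlinarith [mul_le_mul_of_nonneg_left hpt (le_of_lt hE')]
end
end

section
/- (Continuous synchronization filter converges.) Let F > 0, K = 2JF², and let v be a solution of the Lorenz '96 equation on [0,∞) with |v(0)|² ≤ K. Let q : [0,∞) → ℝ^J be differentiable with q(0) = Qq(0) and q'(t) = −q(t) − Q·B(Pv(t)+q(t), Pv(t)+q(t)) + Qf for all t ≥ 0, and set m(t) = Pv(t) + q(t). Then |m(t) − v(t)|² → 0 as t → ∞. -/
open scoped RealInnerProductSpace

noncomputable section

/-- Scalar exponential decay from the ODE `f' = -f` on `[0,∞)`. -/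
lemma l96_decay_aux {f : ℝ → ℝ} (hf : ∀ t, 0 ≤ t → HasDerivAt f (-(f t)) t)
    {t : ℝ} (ht : 0 ≤ t) : f t = Real.exp (-t) * f 0 := by
  set g : ℝ → ℝ := fun s => Real.exp s * f s with hgdef
  have hg : ∀ s, 0 ≤ s → HasDerivAt g 0 s := by
    intro s hs
    have h1 : HasDerivAt (fun y => Real.exp y * f y) (Real.exp s * f s + Real.exp s * -(f s)) s :=
      (Real.hasDerivAt_exp s).mul (hf s hs)
    convert h1 using 1
    ring
  have hcont : ContinuousOn g (Set.Icc 0 t) :=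
    fun s hs => ((hg s hs.1).continuousAt).continuousWithinAt
  have hconst := constant_of_has_deriv_right_zero hcont
    (fun s hs => (hg s hs.1).hasDerivWithinAt) t (Set.right_mem_Icc.mpr ht)
  have hgt : Real.exp t * f t = Real.exp 0 * f 0 := hconst
  rw [Real.exp_zero, one_mul] at hgt
  rw [Real.exp_neg, eq_comm, inv_mul_eq_iff_eq_mul₀ (Real.exp_ne_zero t)]
  linarith [hgt]

/-- the continuous synchronization filter converges:
`|m(t) − v(t)|² → 0` as `t → ∞`, where `m = Pv + q`. -/
theorem l96_sync_filter_converges {J J' : ℕ} [NeZero J] (hJ' : 1 ≤ J') (hJ : J = 3 * J')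
    (F : ℝ) (hF : 0 < F)
    (v q : ℝ → EuclideanSpace ℝ (ZMod J))
    (hv : L96Sol F (Set.Ici 0) v)
    (hv0 : ‖v 0‖ ^ 2 ≤ 2 * J * F ^ 2)
    (hq0 : q 0 = L96Q (q 0))
    (hq : ∀ t : ℝ, 0 ≤ t → HasDerivAt q
      (-q t - L96Q (L96B (L96P (v t) + q t) (L96P (v t) + q t)) + L96Q (L96f F)) t) :
    Filter.Tendsto (fun t : ℝ => ‖(L96P (v t) + q t) - v t‖ ^ 2)
      Filter.atTop (nhds 0) := by
  have h3 : (3:ℕ) ∣ J := ⟨J', hJ⟩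
  -- mod-3 bookkeeping via the cast ring hom to `ZMod 3`
  have hc : ∀ j : ZMod J, (j.val % 3 = 0) ↔ ((j.val : ZMod 3) = 0) := by
    intro j
    rw [ZMod.natCast_eq_zero_iff]
    omega
  have hch : ∀ j : ZMod J, ((j.val : ZMod 3)) = (ZMod.castHom h3 (ZMod 3)) j := by
    intro j; rw [ZMod.castHom_apply, ZMod.natCast_val]
  have hm1 : ∀ j : ZMod J, (((j - 1).val : ZMod 3)) = (j.val : ZMod 3) - 1 := by
    intro j; rw [hch, hch, map_sub, map_one]
  have hp1 : ∀ j : ZMod J, (((j + 1).val : ZMod 3)) = (j.val : ZMod 3) + 1 := by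
    intro j; rw [hch, hch, map_add, map_one]
  have hm2 : ∀ j : ZMod J, (((j - 2).val : ZMod 3)) = (j.val : ZMod 3) - 2 := by
    intro j
    rw [show j - 2 = j - 1 - 1 by ring, hm1, hm1]
    ring
  -- component derivative extraction
  have hproj : ∀ (u : ℝ → EuclideanSpace ℝ (ZMod J)) (d : EuclideanSpace ℝ (ZMod J))
      (t : ℝ) (j : ZMod J), HasDerivAt u d t → HasDerivAt (fun s => u s j) (d j) t := by
    intro u d t j h
    exact (EuclideanSpace.proj (𝕜 := ℝ) j).hasFDerivAt.comp_hasDerivAt t h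
  -- components of q away from the Q-part stay zero
  have hqzero : ∀ (j : ZMod J), j.val % 3 ≠ 0 → ∀ t, 0 ≤ t → q t j = 0 := by
    intro j hj t ht
    have hder : ∀ s, 0 ≤ s → HasDerivAt (fun r => q r j) (-(q s j)) s := by
      intro s hs
      have h := hproj q _ s j (hq s hs)
      have he : ((-q s - L96Q (L96B (L96P (v s) + q s) (L96P (v s) + q s)) + L96Q (L96f F) :
          EuclideanSpace ℝ (ZMod J)) j) = -(q s j) := by
        simp [L96Q, L96P, L96f, PiLp.add_apply, PiLp.sub_apply, PiLp.neg_apply, hj, PiLp.toLp_apply]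
      rwa [he] at h
    have h0 : q 0 j = 0 := by
      have h1 := congrArg (fun x : EuclideanSpace ℝ (ZMod J) => x j) hq0
      simp only [L96Q, L96P, PiLp.sub_apply, PiLp.toLp_apply, if_neg hj] at h1
      linarith [h1]
    rw [l96_decay_aux hder ht, h0, mul_zero]
  -- the error w := Pv + q - v decays exponentially, componentwise
  set w0 : EuclideanSpace ℝ (ZMod J) := (L96P (v 0) + q 0) - v 0 with hw0def
  have hkey : ∀ t, 0 ≤ t → (L96P (v t) + q t) - v t = Real.exp (-t) • w0 := by
    intro t ht
    ext j
    have hsmul : (Real.exp (-t) • w0) j = Real.exp (-t) * w0 j := rfl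
    by_cases hj : j.val % 3 = 0
    · -- Q-coordinate: f s = q s j - v s j satisfies f' = -f
      have hj3 : (j.val : ZMod 3) = 0 := (hc j).mp hj
      have e1 : (j - 1).val % 3 ≠ 0 := by
        rw [Ne, hc, hm1, hj3]; decide
      have e2 : (j + 1).val % 3 ≠ 0 := by
        rw [Ne, hc, hp1, hj3]; decide
      have e3 : (j - 2).val % 3 ≠ 0 := by
        rw [Ne, hc, hm2, hj3]; decide
      have hder : ∀ s, 0 ≤ s → HasDerivAt (fun r => q r j - v r j) (-(q s j - v s j)) s := by
        intro s hs
        have hqd := hproj q _ s j (hq s hs)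
        have hvd := hproj v _ s j (hv s hs)
        have hd := hqd.sub hvd
        have hm : ∀ i : ZMod J, i.val % 3 ≠ 0 →
            ((L96P (v s) + q s : EuclideanSpace ℝ (ZMod J)) i) = v s i := by
          intro i hi
          simp [L96P, PiLp.add_apply, if_neg hi, hqzero i hi s hs]
        have hBeq : L96B (L96P (v s) + q s) (L96P (v s) + q s) j = L96B (v s) (v s) j := by
          simp only [L96B, PiLp.toLp_apply, hm _ e1, hm _ e2, hm _ e3]
        have he : ((-q s - L96Q (L96B (L96P (v s) + q s) (L96P (v s) + q s)) + L96Q (L96f F) :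
              EuclideanSpace ℝ (ZMod J)) j)
            - ((-v s - L96B (v s) (v s) + L96f F : EuclideanSpace ℝ (ZMod J)) j)
            = -(q s j - v s j) := by
          simp only [L96Q, L96f, PiLp.add_apply, PiLp.sub_apply, PiLp.neg_apply, PiLp.toLp_apply, hBeq]
          simp only [L96P, PiLp.toLp_apply, if_pos hj]
          ring
        rwa [he] at hd
      have hdec := l96_decay_aux hder ht
      have hPj : ∀ s : ℝ, L96P (v s) j = 0 := fun s => by simp [L96P, if_pos hj]
      have hcomp : (((L96P (v t) + q t) - v t : EuclideanSpace ℝ (ZMod J)) j)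
          = Real.exp (-t) * w0 j := by
        simp only [hw0def, PiLp.sub_apply, PiLp.add_apply, hPj, zero_add]
        exact hdec
      rw [hcomp, hsmul]
    · -- P-coordinate: the component equals q's component, which decays
      have hder : ∀ s, 0 ≤ s → HasDerivAt (fun r => q r j) (-(q s j)) s := by
        intro s hs
        have h := hproj q _ s j (hq s hs)
        have he : ((-q s - L96Q (L96B (L96P (v s) + q s) (L96P (v s) + q s)) + L96Q (L96f F) :
            EuclideanSpace ℝ (ZMod J)) j) = -(q s j) := by
          simp [L96Q, L96P, L96f, PiLp.add_apply, PiLp.sub_apply, PiLp.neg_apply, hj, PiLp.toLp_apply]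
        rwa [he] at h
      have hd := l96_decay_aux hder ht
      have hPj : ∀ s : ℝ, L96P (v s) j = v s j := fun s => by simp [L96P, if_neg hj]
      have hcomp : (((L96P (v t) + q t) - v t : EuclideanSpace ℝ (ZMod J)) j)
          = Real.exp (-t) * w0 j := by
        simp only [hw0def, PiLp.sub_apply, PiLp.add_apply, hPj]
        rw [show v t j + q t j - v t j = q t j by ring, hd,
          show v 0 j + q 0 j - v 0 j = q 0 j by ring]
      rw [hcomp, hsmul]
  -- conclude
  have heq : (fun t : ℝ => ‖(L96P (v t) + q t) - v t‖ ^ 2)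
      =ᶠ[Filter.atTop] (fun t : ℝ => Real.exp (-t) ^ 2 * ‖w0‖ ^ 2) := by
    filter_upwards [Filter.eventually_ge_atTop (0:ℝ)] with t ht
    rw [hkey t ht, norm_smul, Real.norm_eq_abs, abs_of_pos (Real.exp_pos _), mul_pow]
  have hlim : Filter.Tendsto (fun t : ℝ => Real.exp (-t) ^ 2 * ‖w0‖ ^ 2)
      Filter.atTop (nhds 0) := by
    have h := (Real.tendsto_exp_neg_atTop_nhds_zero.pow 2).mul_const (‖w0‖ ^ 2)
    simpa using h
  exact hlim.congr' heq.symm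
end
end

section
/- (Two-solution growth bound.) Let F > 0, K = 2JF², and β = 2(2√K − 1). Let u and v be two solutions of the Lorenz '96 equation on an interval [0,T] with |v(t)|² ≤ K for all t ∈ [0,T]. Then for all t ∈ [0,T], |u(t) − v(t)|² ≤ |u(0) − v(0)|²·e^{βt}. -/
open scoped RealInnerProductSpace

noncomputable section

/-! ### Auxiliary lemmas -/

lemma zmod_sum_shift {J : ℕ} [NeZero J] (f : ZMod J → ℝ) (c : ZMod J) :
    ∑ j, f (j + c) = ∑ j, f j :=
  Fintype.sum_equiv (Equiv.addRight c) _ _ (fun _ => rfl)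

lemma norm_sq_sum {J : ℕ} [NeZero J] (w : EuclideanSpace ℝ (ZMod J)) :
    ∑ j, w j ^ 2 = ‖w‖ ^ 2 := by
  rw [EuclideanSpace.norm_eq, Real.sq_sqrt (by positivity)]
  simp [Real.norm_eq_abs, sq_abs]

lemma norm_sq_sum_add {J : ℕ} [NeZero J] (w : EuclideanSpace ℝ (ZMod J)) (c : ZMod J) :
    ∑ j, w (j + c) ^ 2 = ‖w‖ ^ 2 := by
  rw [zmod_sum_shift (fun j => w j ^ 2) c, norm_sq_sum]

lemma norm_sq_sum_sub {J : ℕ} [NeZero J] (w : EuclideanSpace ℝ (ZMod J)) (c : ZMod J) :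
    ∑ j, w (j - c) ^ 2 = ‖w‖ ^ 2 := by
  rw [← norm_sq_sum_add w (-c)]
  exact Finset.sum_congr rfl fun j _ => by rw [sub_eq_add_neg]

lemma coord_le_norm {J : ℕ} [NeZero J] (v : EuclideanSpace ℝ (ZMod J)) (j : ZMod J) :
    |v j| ≤ ‖v‖ := by
  have h1 : v j ^ 2 ≤ ∑ i, v i ^ 2 :=
    Finset.single_le_sum (f := fun i => v i ^ 2) (fun i _ => sq_nonneg _) (Finset.mem_univ j)
  rw [norm_sq_sum] at h1
  have h2 : |v j| ^ 2 ≤ ‖v‖ ^ 2 := by rwa [sq_abs]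
  nlinarith [abs_nonneg (v j), norm_nonneg v]

lemma tri_bound_aux {J : ℕ} [NeZero J] (v w : EuclideanSpace ℝ (ZMod J))
    (c a b : ZMod J → ZMod J)
    (ha : ∑ j, w (a j) ^ 2 = ‖w‖ ^ 2) (hb : ∑ j, w (b j) ^ 2 = ‖w‖ ^ 2) :
    |∑ j, v (c j) * w (a j) * w (b j)| ≤ ‖v‖ * ‖w‖ ^ 2 := by
  calc |∑ j, v (c j) * w (a j) * w (b j)|
      ≤ ∑ j, |v (c j) * w (a j) * w (b j)| := Finset.abs_sum_le_sum_abs _ _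
    _ ≤ ∑ j, ‖v‖ * ((w (a j) ^ 2 + w (b j) ^ 2) / 2) := by
        refine Finset.sum_le_sum fun j _ => ?_
        have h1 := coord_le_norm v (c j)
        rw [abs_mul, abs_mul]
        nlinarith [sq_nonneg (|w (a j)| - |w (b j)|), abs_nonneg (w (a j)),
          abs_nonneg (w (b j)), sq_abs (w (a j)), sq_abs (w (b j)),
          abs_nonneg (v (c j)), norm_nonneg v,
          mul_nonneg (abs_nonneg (w (a j))) (abs_nonneg (w (b j)))]
    _ = ‖v‖ * ‖w‖ ^ 2 := by
        rw [← Finset.mul_sum, ← Finset.sum_div, Finset.sum_add_distrib, ha, hb]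
        ring

lemma tri_bound1 {J : ℕ} [NeZero J] (v w : EuclideanSpace ℝ (ZMod J)) :
    |∑ j, v j * w (j - 1) * w (j + 1)| ≤ ‖v‖ * ‖w‖ ^ 2 :=
  tri_bound_aux v w id (· - 1) (· + 1) (norm_sq_sum_sub w 1) (norm_sq_sum_add w 1)

lemma tri_bound2 {J : ℕ} [NeZero J] (v w : EuclideanSpace ℝ (ZMod J)) :
    |∑ j, v (j + 2) * w j * w (j + 1)| ≤ ‖v‖ * ‖w‖ ^ 2 :=
  tri_bound_aux v w (· + 2) id (· + 1) (norm_sq_sum w) (norm_sq_sum_add w 1)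

lemma key_identity {J : ℕ} [NeZero J] (u v z : EuclideanSpace ℝ (ZMod J))
    (hz : ∀ j, z j = u j - v j) :
    ∑ j, (L96B u u j - L96B v v j) * z j
      = (∑ j, v j * z (j - 1) * z (j + 1)) - ∑ j, v (j + 2) * z j * z (j + 1) := by
  have fix : ∀ j : ZMod J, j + 1 - 1 = j ∧ j + 1 + 1 = j + 2 ∧ j + 1 - 2 = j - 1 :=
    fun j => ⟨by ring, by ring, by ring⟩
  have e14 : ∑ j, v (j-1) * z (j+1) * z j = ∑ j, v (j-2) * z (j-1) * z j := by
    rw [← zmod_sum_shift (fun j => v (j-2) * z (j-1) * z j) 1]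
    refine Finset.sum_congr rfl fun j _ => ?_
    rw [(fix j).1, (fix j).2.2]; ring
  have e36 : ∑ j, z (j-1) * z (j+1) * z j = ∑ j, z (j-2) * z (j-1) * z j := by
    rw [← zmod_sum_shift (fun j => z (j-2) * z (j-1) * z j) 1]
    refine Finset.sum_congr rfl fun j _ => ?_
    rw [(fix j).1, (fix j).2.2]; ring
  have e2 : ∑ j, z (j-1) * v (j+1) * z j = ∑ j, v (j+2) * z j * z (j+1) := by
    rw [← zmod_sum_shift (fun j => z (j-1) * v (j+1) * z j) 1]
    refine (Finset.sum_congr rfl fun j _ => ?_).symm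
    rw [(fix j).1, (fix j).2.1]; ring
  have e5 : ∑ j, z (j-2) * v (j-1) * z j = ∑ j, v j * z (j-1) * z (j+1) := by
    rw [← zmod_sum_shift (fun j => z (j-2) * v (j-1) * z j) 1]
    refine (Finset.sum_congr rfl fun j _ => ?_).symm
    rw [(fix j).1, (fix j).2.2]; ring
  have expand : ∑ j, (L96B u u j - L96B v v j) * z j
      = -(∑ j, v (j-1) * z (j+1) * z j) - (∑ j, z (j-1) * v (j+1) * z j)
        - (∑ j, z (j-1) * z (j+1) * z j) + (∑ j, v (j-2) * z (j-1) * z j)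
        + (∑ j, z (j-2) * v (j-1) * z j) + ∑ j, z (j-2) * z (j-1) * z j := by
    simp only [← Finset.sum_neg_distrib, ← Finset.sum_add_distrib, ← Finset.sum_sub_distrib]
    refine Finset.sum_congr rfl fun j _ => ?_
    simp only [L96B, hz, PiLp.toLp_apply]
    ring
  rw [expand, e14, e36, e2, e5]
  ring

/-- two-solution growth bound
`|u(t) − v(t)|² ≤ |u(0) − v(0)|² e^{βt}` with `β = 2(2√K − 1)`, `K = 2JF²`. -/
theorem l96_two_solution_growth {J : ℕ} [NeZero J] (hJ : 3 ≤ J)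
    (F : ℝ) (hF : 0 < F) (K β T : ℝ)
    (hK : K = 2 * J * F ^ 2) (hβ : β = 2 * (2 * Real.sqrt K - 1))
    (u v : ℝ → EuclideanSpace ℝ (ZMod J))
    (hu : L96Sol F (Set.Icc 0 T) u) (hv : L96Sol F (Set.Icc 0 T) v)
    (hvK : ∀ t ∈ Set.Icc (0:ℝ) T, ‖v t‖ ^ 2 ≤ K) :
    ∀ t ∈ Set.Icc (0:ℝ) T,
      ‖u t - v t‖ ^ 2 ≤ ‖u 0 - v 0‖ ^ 2 * Real.exp (β * t) := by
  intro t ht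
  have hT : (0:ℝ) ≤ T := le_trans ht.1 ht.2
  set I : Set ℝ := Set.Icc (0:ℝ) T with hI
  set z : ℝ → EuclideanSpace ℝ (ZMod J) := fun s => u s - v s with hzdef
  have hzc : ∀ (s : ℝ) (j : ZMod J), z s j = u s j - v s j := fun _ _ => rfl
  set D : ℝ → EuclideanSpace ℝ (ZMod J) :=
    fun s => -(z s) - (L96B (u s) (u s) - L96B (v s) (v s)) with hDdef
  have hw : ∀ s ∈ I, HasDerivAt z (D s) s := by
    intro s hs
    have h := (hu s hs).sub (hv s hs)
    refine h.congr_deriv ?_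
    simp only [hDdef, hzdef]
    abel
  set G : ℝ → ℝ := fun s => ⟪z s, z s⟫ with hGdef
  have hG : ∀ s ∈ I, HasDerivAt G (2 * ⟪z s, D s⟫) s := by
    intro s hs
    have h := HasDerivAt.inner ℝ (hw s hs) (hw s hs)
    refine h.congr_deriv ?_
    rw [real_inner_comm]; ring
  -- the differential inequality
  have hineq : ∀ s ∈ I, 2 * ⟪z s, D s⟫ ≤ β * G s := by
    intro s hs
    have hvs : ‖v s‖ ≤ Real.sqrt K := by
      calc ‖v s‖ = Real.sqrt (‖v s‖ ^ 2) := (Real.sqrt_sq (norm_nonneg _)).symm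
        _ ≤ Real.sqrt K := Real.sqrt_le_sqrt (hvK s hs)
    have hsplit : ⟪z s, D s⟫
        = -‖z s‖ ^ 2 - ⟪L96B (u s) (u s) - L96B (v s) (v s), z s⟫ := by
      rw [hDdef, inner_sub_right, inner_neg_right, real_inner_self_eq_norm_sq,
        real_inner_comm (z s) (L96B (u s) (u s) - L96B (v s) (v s))]
    have hBsum : ⟪L96B (u s) (u s) - L96B (v s) (v s), z s⟫
        = ∑ j, (L96B (u s) (u s) j - L96B (v s) (v s) j) * z s j := by
      rw [PiLp.inner_apply]
      refine Finset.sum_congr rfl fun j _ => ?_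
      simp [RCLike.inner_apply, conj_trivial]
      ring
    have hkey := key_identity (u s) (v s) (z s) (hzc s)
    have hA := tri_bound1 (v s) (z s)
    have hC := tri_bound2 (v s) (z s)
    have hGeq : G s = ‖z s‖ ^ 2 := real_inner_self_eq_norm_sq _
    have hwnn : (0:ℝ) ≤ ‖z s‖ ^ 2 := by positivity
    have hv1 : ‖v s‖ * ‖z s‖ ^ 2 ≤ Real.sqrt K * ‖z s‖ ^ 2 :=
      mul_le_mul_of_nonneg_right hvs hwnn
    rw [hsplit, hBsum, hkey, hβ, hGeq]
    have h1 := (abs_le.1 hA).1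
    have h2 := (abs_le.1 hC).2
    nlinarith
  -- Grönwall via an auxiliary nonincreasing function
  set h : ℝ → ℝ := fun s => G s * Real.exp (-β * s) with hhdef
  have hexp : ∀ s : ℝ, HasDerivAt (fun r => Real.exp (-β * r)) (Real.exp (-β * s) * (-β)) s := by
    intro s
    have h1 : HasDerivAt (fun r : ℝ => -β * r) (-β) s := by
      simpa using (hasDerivAt_id s).const_mul (-β)
    exact h1.exp
  have hh : ∀ s ∈ I, HasDerivAt h
      (2 * ⟪z s, D s⟫ * Real.exp (-β * s) + G s * (Real.exp (-β * s) * (-β))) s :=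
    fun s hs => (hG s hs).mul (hexp s)
  have hderiv_nonpos : ∀ s ∈ I,
      2 * ⟪z s, D s⟫ * Real.exp (-β * s) + G s * (Real.exp (-β * s) * (-β)) ≤ 0 := by
    intro s hs
    have h1 := hineq s hs
    have h2 : (0:ℝ) < Real.exp (-β * s) := Real.exp_pos _
    nlinarith
  have hanti : AntitoneOn h I := by
    refine antitoneOn_of_deriv_nonpos (convex_Icc 0 T) ?_ ?_ ?_
    · exact fun s hs => ((hh s hs).continuousAt).continuousWithinAt
    · intro s hs
      rw [interior_Icc] at hs
      exact ((hh s (Set.Ioo_subset_Icc_self hs)).differentiableAt).differentiableWithinAt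
    · intro s hs
      rw [interior_Icc] at hs
      rw [(hh s (Set.Ioo_subset_Icc_self hs)).deriv]
      exact hderiv_nonpos s (Set.Ioo_subset_Icc_self hs)
  have h0mem : (0:ℝ) ∈ I := Set.left_mem_Icc.2 hT
  have hht : h t ≤ h 0 := hanti h0mem ht ht.1
  have hGt : G t = ‖u t - v t‖ ^ 2 := real_inner_self_eq_norm_sq _
  have hG0 : G 0 = ‖u 0 - v 0‖ ^ 2 := real_inner_self_eq_norm_sq _
  have hfin : G t ≤ G 0 * Real.exp (β * t) := by
    have hmul := mul_le_mul_of_nonneg_right hht (Real.exp_pos (β * t)).le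
    simp only [hhdef] at hmul
    calc G t = G t * Real.exp (-β * t) * Real.exp (β * t) := by
          rw [mul_assoc, ← Real.exp_add]
          ring_nf
          simp
      _ ≤ G 0 * Real.exp (-β * 0) * Real.exp (β * t) := hmul
      _ = G 0 * Real.exp (β * t) := by simp
  rwa [hGt, hG0] at hfin
end
end
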